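/- arXiv:2507.08640 — 10 statements merged into one kernel-verified Lean document; each statement's English description precedes it below -/
import Mathlib

section
/- Let n be a natural number and for each j : Fin n let ι j be a nonempty finite index type. For each j, let A_j, B_j : Matrix (ι j) (ι j) ℝ be symmetric matrices (Aᵀ = A, Bᵀ = B) such that A_j is positive semidefinite (for all x : ι j → ℝ, x ⬝ᵥ A_j.mulVec x ≥ 0) and for all x, y : ι j → ℝ one has |x ⬝ᵥ B_j.mulVec y| ≤ (1/2) * (x ⬝ᵥ A_j.mulVec x + y ⬝ᵥ A_j.mulVec y). Define the product (tensor) matrices A, B : Matrix (Π j, ι j) (Π j, ι j) ℝ by A u v = ∏ j, A_j (u j) (v j) and B u v = ∏ j, B_j (u j) (v j). Then A and B are symmetric, A is positive semidefinite, and for all x, y : (Π j, ι j) → ℝ one has |x ⬝ᵥ B.mulVec y| ≤ (1/2) * (x ⬝ᵥ A.mulVec x + y ⬝ᵥ A.mulVec y). -/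
open Matrix

private lemma tensor_psd {n : ℕ} (κ : Fin n → Type*) [∀ j, Fintype (κ j)]
    (M : ∀ j, Matrix (κ j) (κ j) ℝ) (hM : ∀ j, (M j).PosSemidef) :
    Matrix.PosSemidef (Matrix.of fun u v => ∏ j, M j (u j) (v j) :
      Matrix (∀ j, κ j) (∀ j, κ j) ℝ) := by
  classical
  choose C hC using fun j => (by open scoped MatrixOrder in exact CStarAlgebra.nonneg_iff_eq_star_mul_self.mp (hM j).nonneg : ∃ B : Matrix (κ j) (κ j) ℝ, M j = star B * B)
  set D : Matrix (∀ j, κ j) (∀ j, κ j) ℝ := Matrix.of fun k u => ∏ j, C j (k j) (u j) with hD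
  have key : (Matrix.of fun u v => ∏ j, M j (u j) (v j) :
      Matrix (∀ j, κ j) (∀ j, κ j) ℝ) = Dᴴ * D := by
    ext u v
    rw [Matrix.mul_apply]
    have h1 : ∀ j, M j (u j) (v j) = ∑ k, C j k (u j) * C j k (v j) := by
      intro j
      rw [hC j, Matrix.mul_apply]
      simp [Matrix.conjTranspose_apply]
    simp only [Matrix.of_apply]
    simp_rw [h1]
    rw [Finset.prod_univ_sum, Fintype.piFinset_univ]
    refine Finset.sum_congr rfl fun k _ => ?_
    simp [hD, Finset.prod_mul_distrib, mul_comm]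
  rw [key]
  exact Matrix.posSemidef_conjTranspose_mul_self D

private lemma quad_fromBlocks {m : Type*} [Fintype m] (P Q : Matrix m m ℝ) (x y : m → ℝ) :
    Sum.elim x y ⬝ᵥ (fromBlocks P Q Q P).mulVec (Sum.elim x y)
      = x ⬝ᵥ P.mulVec x + y ⬝ᵥ P.mulVec y + (x ⬝ᵥ Q.mulVec y + y ⬝ᵥ Q.mulVec x) := by
  show Sum.elim x y ⬝ᵥ (fromBlocks P Q Q P) *ᵥ (Sum.elim x y) = _
  rw [fromBlocks_mulVec]
  simp only [Sum.elim_comp_inl, Sum.elim_comp_inr]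
  rw [sumElim_dotProduct_sumElim, dotProduct_add, dotProduct_add]
  ring

private lemma dot_symm {m : Type*} [Fintype m] (Q : Matrix m m ℝ) (hQ : Qᵀ = Q)
    (x y : m → ℝ) : y ⬝ᵥ Q.mulVec x = x ⬝ᵥ Q.mulVec y := by
  rw [dotProduct_mulVec]
  conv_lhs => rw [← hQ]
  rw [vecMul_transpose, dotProduct_comm]

theorem tensor_quadratic_form_bound_real
    (n : ℕ) (ι : Fin n → Type*) [∀ j, Fintype (ι j)] [∀ j, Nonempty (ι j)]
    (A B : ∀ j, Matrix (ι j) (ι j) ℝ)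
    (hAsymm : ∀ j, (A j)ᵀ = A j) (hBsymm : ∀ j, (B j)ᵀ = B j)
    (hApsd : ∀ j, ∀ x : ι j → ℝ, x ⬝ᵥ (A j).mulVec x ≥ 0)
    (hdom : ∀ j, ∀ x y : ι j → ℝ,
      |x ⬝ᵥ (B j).mulVec y| ≤ (1/2) * (x ⬝ᵥ (A j).mulVec x + y ⬝ᵥ (A j).mulVec y)) :
    let 𝒜 : Matrix (∀ j, ι j) (∀ j, ι j) ℝ := fun u v => ∏ j, A j (u j) (v j)
    let ℬ : Matrix (∀ j, ι j) (∀ j, ι j) ℝ := fun u v => ∏ j, B j (u j) (v j)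
    𝒜ᵀ = 𝒜 ∧ ℬᵀ = ℬ ∧ (∀ x : (∀ j, ι j) → ℝ, x ⬝ᵥ 𝒜.mulVec x ≥ 0) ∧
      (∀ x y : (∀ j, ι j) → ℝ,
        |x ⬝ᵥ ℬ.mulVec y| ≤ (1/2) * (x ⬝ᵥ 𝒜.mulVec x + y ⬝ᵥ 𝒜.mulVec y)) := by
  classical
  intro 𝒜 ℬ
  have hAe : ∀ j (u v : ι j), A j v u = A j u v := fun j u v => by
    simpa using congrFun (congrFun (hAsymm j) u) v
  have hBe : ∀ j (u v : ι j), B j v u = B j u v := fun j u v => by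
    simpa using congrFun (congrFun (hBsymm j) u) v
  have h𝒜s : 𝒜ᵀ = 𝒜 := by
    ext u v
    show (∏ j, A j (v j) (u j)) = ∏ j, A j (u j) (v j)
    exact Finset.prod_congr rfl fun j _ => hAe j (u j) (v j)
  have hℬs : ℬᵀ = ℬ := by
    ext u v
    show (∏ j, B j (v j) (u j)) = ∏ j, B j (u j) (v j)
    exact Finset.prod_congr rfl fun j _ => hBe j (u j) (v j)
  have hApsd' : ∀ j, (A j).PosSemidef := by
    intro j
    refine Matrix.PosSemidef.of_dotProduct_mulVec_nonneg ?_ ?_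
    · show (A j)ᴴ = A j
      ext u v
      simpa using hAe j u v
    · intro x
      simpa using hApsd j x
  have h𝒜psd := tensor_psd ι A hApsd'
  refine ⟨h𝒜s, hℬs, fun x => by have := h𝒜psd.dotProduct_mulVec_nonneg x; rw [star_trivial] at this; exact this, ?_⟩
  -- block matrices
  set Cb : ∀ j, Matrix (ι j ⊕ ι j) (ι j ⊕ ι j) ℝ :=
    fun j => fromBlocks (A j) (B j) (B j) (A j) with hCbdef
  have hCb : ∀ j, (Cb j).PosSemidef := by
    intro j
    refine Matrix.PosSemidef.of_dotProduct_mulVec_nonneg ?_ ?_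
    · show (Cb j)ᴴ = Cb j
      ext (u|u) (v|v) <;>
        simp [hCbdef, conjTranspose_apply, fromBlocks_apply₁₁, fromBlocks_apply₁₂,
          fromBlocks_apply₂₁, fromBlocks_apply₂₂, hAe, hBe]
    · intro z
      have hz : z = Sum.elim (z ∘ Sum.inl) (z ∘ Sum.inr) := by
        funext w; cases w <;> rfl
      set x := z ∘ Sum.inl
      set y := z ∘ Sum.inr
      have h1 : star z ⬝ᵥ (Cb j) *ᵥ z = x ⬝ᵥ (A j).mulVec x + y ⬝ᵥ (A j).mulVec y +
          (x ⬝ᵥ (B j).mulVec y + y ⬝ᵥ (B j).mulVec x) := by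
        rw [show star z = z from star_trivial z]
        conv_lhs => rw [hz]
        exact quad_fromBlocks (A j) (B j) x y
      rw [h1, dot_symm (B j) (hBsymm j) x y]
      have := hdom j x y
      have := neg_abs_le (x ⬝ᵥ (B j).mulVec y)
      linarith
  have h𝒞 := tensor_psd (fun j => ι j ⊕ ι j) Cb hCb
  set e : (∀ j, ι j) ⊕ (∀ j, ι j) → (∀ j, ι j ⊕ ι j) :=
    Sum.elim (fun u j => Sum.inl (u j)) (fun u j => Sum.inr (u j)) with hedef
  have h𝒟 := h𝒞.submatrix e
  have h𝒟eq : (Matrix.of fun u v => ∏ j, Cb j (u j) (v j) :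
      Matrix (∀ j, ι j ⊕ ι j) (∀ j, ι j ⊕ ι j) ℝ).submatrix e e
      = fromBlocks 𝒜 ℬ ℬ 𝒜 := by
    ext (u|u) (v|v) <;> rfl
  rw [h𝒟eq] at h𝒟
  intro x y
  have key1 : (0:ℝ) ≤ x ⬝ᵥ 𝒜.mulVec x + y ⬝ᵥ 𝒜.mulVec y +
      (x ⬝ᵥ ℬ.mulVec y + y ⬝ᵥ ℬ.mulVec x) := by
    have := h𝒟.dotProduct_mulVec_nonneg (Sum.elim x y)
    rwa [star_trivial, quad_fromBlocks] at this
  have key2 : (0:ℝ) ≤ x ⬝ᵥ 𝒜.mulVec x + y ⬝ᵥ 𝒜.mulVec y -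
      (x ⬝ᵥ ℬ.mulVec y + y ⬝ᵥ ℬ.mulVec x) := by
    have := h𝒟.dotProduct_mulVec_nonneg (Sum.elim x (-y))
    rw [star_trivial, quad_fromBlocks] at this
    simp only [mulVec_neg, dotProduct_neg, neg_dotProduct, neg_neg] at this
    linarith
  have hsym := dot_symm ℬ hℬs x y
  rw [abs_le]
  constructor <;> linarith
end

section
/- Let ι be a nonempty finite type and let A, B, C : Matrix ι ι ℝ with A and B symmetric (Aᵀ = A, Bᵀ = B), C symmetric and invertible, and C * C = A. Then the following are equivalent: (i) for all x, y : ι → ℝ, |x ⬝ᵥ B.mulVec y| ≤ (1/2) * (x ⬝ᵥ A.mulVec x + y ⬝ᵥ A.mulVec y); (ii) every real eigenvalue λ of the symmetric matrix C⁻¹ * B * C⁻¹ (equivalently, every element λ of the real spectrum of C⁻¹ * B * C⁻¹) satisfies |λ| ≤ 1. -/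
open Matrix

private lemma dot_shift {ι : Type*} [Fintype ι] (M : Matrix ι ι ℝ) (x y : ι → ℝ) :
    x ⬝ᵥ M.mulVec y = Mᵀ.mulVec x ⬝ᵥ y := by
  rw [Matrix.dotProduct_mulVec, ← Matrix.vecMul_transpose, Matrix.transpose_transpose]

private lemma key_lemma {ι : Type*} [Fintype ι] [DecidableEq ι] (D : Matrix ι ι ℝ)
    (hD : D.IsHermitian) :
    (∀ u v : ι → ℝ, |u ⬝ᵥ D.mulVec v| ≤ (1/2) * (u ⬝ᵥ u + v ⬝ᵥ v)) ↔
      ∀ μ ∈ spectrum ℝ D, |μ| ≤ 1 := by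
  constructor
  · intro h μ hμ
    rw [spectrum.mem_iff] at hμ
    obtain ⟨w, hw0, hw⟩ : ∃ w ≠ 0, (algebraMap ℝ (Matrix ι ι ℝ) μ - D).mulVec w = 0 := by
      rw [Matrix.exists_mulVec_eq_zero_iff]
      by_contra hdet
      exact hμ ((Matrix.isUnit_iff_isUnit_det _).2 (isUnit_iff_ne_zero.2 hdet))
    have hDw : D.mulVec w = μ • w := by
      rw [Matrix.sub_mulVec, sub_eq_zero, Algebra.algebraMap_eq_smul_one,
        Matrix.smul_mulVec, Matrix.one_mulVec] at hw
      exact hw.symm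
    have hnn : (0:ℝ) ≤ w ⬝ᵥ w := Finset.sum_nonneg fun i _ => mul_self_nonneg (w i)
    have hww : (0:ℝ) < w ⬝ᵥ w := by
      rcases lt_or_eq_of_le hnn with h' | h'
      · exact h'
      · exact absurd (dotProduct_self_eq_zero.mp h'.symm) hw0
    have hform : |w ⬝ᵥ D.mulVec w| = |μ| * (w ⬝ᵥ w) := by
      rw [hDw, dotProduct_smul, smul_eq_mul, abs_mul, abs_of_pos hww]
    have := h w w
    rw [hform] at this
    nlinarith
  · intro h u v
    set U : Matrix ι ι ℝ := (hD.eigenvectorUnitary : Matrix ι ι ℝ) with hU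
    have hUU : U * star U = 1 := Matrix.mem_unitaryGroup_iff.mp hD.eigenvectorUnitary.2
    set a : ι → ℝ := (star U).mulVec u with ha
    set b : ι → ℝ := (star U).mulVec v with hb
    have hstar : star U = Uᵀ := by
      ext i j; simp [Matrix.star_apply]
    have hdiag : D = U * Matrix.diagonal hD.eigenvalues * star U := by
      have h1 := hD.spectral_theorem
      have h2 : (RCLike.ofReal ∘ hD.eigenvalues : ι → ℝ) = hD.eigenvalues := by
        ext i; simp
      rw [h2] at h1
      exact h1
    have hform : u ⬝ᵥ D.mulVec v = ∑ i, hD.eigenvalues i * (a i * b i) := by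
      conv_lhs => rw [hdiag]
      rw [← Matrix.mulVec_mulVec, ← Matrix.mulVec_mulVec, dot_shift, ← hstar, ← ha, ← hb]
      simp [Matrix.mulVec_diagonal, dotProduct, mul_comm, mul_left_comm]
    have hnorm : ∀ w : ι → ℝ, ((star U).mulVec w) ⬝ᵥ ((star U).mulVec w) = w ⬝ᵥ w := by
      intro w
      rw [dot_shift, hstar, Matrix.transpose_transpose, ← hstar, Matrix.mulVec_mulVec, hUU,
        Matrix.one_mulVec]
    have habs : ∀ i, |hD.eigenvalues i| ≤ 1 := fun i => h _ (hD.eigenvalues_mem_spectrum_real i)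
    calc |u ⬝ᵥ D.mulVec v| = |∑ i, hD.eigenvalues i * (a i * b i)| := by rw [hform]
      _ ≤ ∑ i, |hD.eigenvalues i * (a i * b i)| := Finset.abs_sum_le_sum_abs _ _
      _ ≤ ∑ i, (1/2) * (a i * a i + b i * b i) := by
          apply Finset.sum_le_sum
          intro i _
          rw [abs_mul, abs_mul]
          have h1 : |hD.eigenvalues i| * (|a i| * |b i|) ≤ 1 * (|a i| * |b i|) :=
            mul_le_mul_of_nonneg_right (habs i) (by positivity)
          have h2 : |a i| * |b i| ≤ (1/2) * (a i * a i + b i * b i) := by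
            nlinarith [sq_nonneg (|a i| - |b i|), abs_mul_abs_self (a i), abs_mul_abs_self (b i)]
          linarith
      _ = (1/2) * (a ⬝ᵥ a + b ⬝ᵥ b) := by
          simp only [dotProduct, ← Finset.sum_add_distrib, ← Finset.mul_sum]
      _ = (1/2) * (u ⬝ᵥ u + v ⬝ᵥ v) := by rw [ha, hb, hnorm, hnorm]

theorem form_bound_iff_eigenvalues_le_one {ι : Type*} [Fintype ι] [Nonempty ι] [DecidableEq ι]
    (A B C : Matrix ι ι ℝ) (hA : Aᵀ = A) (hB : Bᵀ = B) (hC : Cᵀ = C)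
    (hCinv : IsUnit C.det) (hCC : C * C = A) :
    (∀ x y : ι → ℝ,
        |x ⬝ᵥ B.mulVec y| ≤ (1/2) * (x ⬝ᵥ A.mulVec x + y ⬝ᵥ A.mulVec y)) ↔
      (∀ μ ∈ spectrum ℝ (C⁻¹ * B * C⁻¹), |μ| ≤ 1) := by
  have hCt : C⁻¹ᵀ = C⁻¹ := by rw [Matrix.transpose_nonsing_inv, hC]
  have hCCinv : C * C⁻¹ = 1 := Matrix.mul_nonsing_inv C hCinv
  have hCinvC : C⁻¹ * C = 1 := Matrix.nonsing_inv_mul C hCinv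
  have hDt : (C⁻¹ * B * C⁻¹)ᵀ = C⁻¹ * B * C⁻¹ := by
    rw [Matrix.transpose_mul, Matrix.transpose_mul, hCt, hB, mul_assoc]
  have hD : (C⁻¹ * B * C⁻¹).IsHermitian := by
    rw [Matrix.IsHermitian]
    ext i j
    rw [Matrix.conjTranspose_apply]
    simpa using congrFun (congrFun hDt i) j
  have e1 : ∀ x y : ι → ℝ,
      x ⬝ᵥ B.mulVec y = (C.mulVec x) ⬝ᵥ (C⁻¹ * B * C⁻¹).mulVec (C.mulVec y) := by
    intro x y
    rw [Matrix.mulVec_mulVec, mul_assoc, mul_assoc, hCinvC, mul_one,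
      dot_shift, dot_shift, Matrix.mulVec_mulVec]
    congr 1
    rw [Matrix.transpose_mul, hCt, mul_assoc, hCinvC, mul_one, hB]
  have e2 : ∀ x : ι → ℝ, x ⬝ᵥ A.mulVec x = (C.mulVec x) ⬝ᵥ (C.mulVec x) := by
    intro x
    rw [← hCC, ← Matrix.mulVec_mulVec, dot_shift, hC]
  rw [← key_lemma _ hD]
  constructor
  · intro h u v
    have := h (C⁻¹.mulVec u) (C⁻¹.mulVec v)
    rw [e1, e2, e2] at this
    simpa [Matrix.mulVec_mulVec, hCCinv] using this
  · intro h x y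
    rw [e1, e2, e2]
    exact h (C.mulVec x) (C.mulVec y)
end

section
/- Let ι and κ be nonempty finite types and let A : Matrix ι ι ℝ and B : Matrix κ κ ℝ be symmetric matrices (Aᵀ = A, Bᵀ = B). Then the real spectrum of the Kronecker product A ⊗ₖ B equals the set of all products λ * μ where λ lies in the real spectrum of A and μ lies in the real spectrum of B. -/
open Matrix Kronecker in
theorem kronecker_spectrum {ι κ : Type*} [Fintype ι] [Fintype κ]
    [Nonempty ι] [Nonempty κ] [DecidableEq ι] [DecidableEq κ]
    (A : Matrix ι ι ℝ) (B : Matrix κ κ ℝ) (hA : Aᵀ = A) (hB : Bᵀ = B) :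
    spectrum ℝ (A ⊗ₖ B) =
      {x : ℝ | ∃ l ∈ spectrum ℝ A, ∃ m ∈ spectrum ℝ B, x = l * m} := by
  have hA' : A.IsHermitian := by
    rw [Matrix.IsHermitian, conjTranspose_eq_transpose_of_trivial, hA]
  have hB' : B.IsHermitian := by
    rw [Matrix.IsHermitian, conjTranspose_eq_transpose_of_trivial, hB]
  set U : Matrix ι ι ℝ := (hA'.eigenvectorUnitary : Matrix ι ι ℝ) with hU
  set V : Matrix κ κ ℝ := (hB'.eigenvectorUnitary : Matrix κ κ ℝ) with hV
  have hstar : star (U ⊗ₖ V) = star U ⊗ₖ star V := by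
    ext ⟨i, j⟩ ⟨k, l⟩
    simp [Matrix.star_eq_conjTranspose, Matrix.conjTranspose_apply]
  have hUm : U ∈ unitary (Matrix ι ι ℝ) := hA'.eigenvectorUnitary.2
  have hVm : V ∈ unitary (Matrix κ κ ℝ) := hB'.eigenvectorUnitary.2
  have hW : (U ⊗ₖ V) ∈ unitary (Matrix (ι × κ) (ι × κ) ℝ) := by
    constructor
    · rw [hstar, ← mul_kronecker_mul, (Unitary.mem_iff.mp hUm).1,
        (Unitary.mem_iff.mp hVm).1, one_kronecker_one]
    · rw [hstar, ← mul_kronecker_mul, (Unitary.mem_iff.mp hUm).2,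
        (Unitary.mem_iff.mp hVm).2, one_kronecker_one]
  have key : A ⊗ₖ B = (U ⊗ₖ V) *
      diagonal (fun p : ι × κ => hA'.eigenvalues p.1 * hB'.eigenvalues p.2) *
      star (U ⊗ₖ V) := by
    conv_lhs => rw [hA'.spectral_theorem, hB'.spectral_theorem, Unitary.conjStarAlgAut_apply,
      Unitary.conjStarAlgAut_apply]
    rw [mul_kronecker_mul, mul_kronecker_mul, diagonal_kronecker_diagonal, hstar]
    rfl
  rw [key, Unitary.spectrum_star_right_conjugate (U := ⟨U ⊗ₖ V, hW⟩), spectrum_diagonal,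
    hA'.spectrum_real_eq_range_eigenvalues, hB'.spectrum_real_eq_range_eigenvalues]
  ext x
  simp only [Set.mem_range, Set.mem_setOf_eq, Set.mem_range]
  constructor
  · rintro ⟨⟨i, j⟩, rfl⟩
    exact ⟨_, ⟨i, rfl⟩, _, ⟨j, rfl⟩, rfl⟩
  · rintro ⟨l, ⟨i, rfl⟩, m, ⟨j, rfl⟩, rfl⟩
    exact ⟨(i, j), rfl⟩
end

section
/- Let t, r be natural numbers and let f : Fin t → ℕ satisfy ∑ i, f i = 2 * r. Then the multinomial coefficient (2r)! / ∏ i, (f i)! equals the sum, over all functions c : Fin t → ℕ with c i ≤ f i for every i and ∑ i, c i = r, of the product of multinomial coefficients (r! / ∏ i, (c i)!) * (r! / ∏ i, (f i − c i)!). In Lean terms: Nat.multinomial Finset.univ f = ∑ over such c of Nat.multinomial Finset.univ c * Nat.multinomial Finset.univ (fun i => f i − c i). -/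
open Finset MvPolynomial

lemma prod_X_pow_univ (t : ℕ) (k : Fin t → ℕ) :
    (∏ i, (X i : MvPolynomial (Fin t) ℕ) ^ k i) =
      monomial (Finsupp.equivFunOnFinite.symm k) 1 := by
  rw [← MvPolynomial.prod_X_pow_eq_monomial]
  have hcoe : ∀ i, (Finsupp.equivFunOnFinite.symm k) i = k i := fun i => rfl
  rw [show (∏ x ∈ (Finsupp.equivFunOnFinite.symm k).support,
      (X x : MvPolynomial (Fin t) ℕ) ^ (Finsupp.equivFunOnFinite.symm k) x) =
      ∏ x ∈ (Finsupp.equivFunOnFinite.symm k).support, (X x : MvPolynomial (Fin t) ℕ) ^ k x from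
    Finset.prod_congr rfl fun i _ => by rw [hcoe]]
  refine (Finset.prod_subset (Finset.subset_univ _) ?_).symm
  intro x _ hx
  have : k x = 0 := by
    have := Finsupp.notMem_support_iff.mp hx
    rwa [hcoe] at this
  simp [this]

lemma coeff_sum_X_pow (t n : ℕ) (m : Fin t →₀ ℕ) :
    MvPolynomial.coeff m ((∑ i, (X i : MvPolynomial (Fin t) ℕ)) ^ n) =
      if ∑ i, m i = n then Nat.multinomial Finset.univ m else 0 := by
  rw [Finset.sum_pow_eq_sum_piAntidiag, MvPolynomial.coeff_sum]
  have key : ∀ k ∈ piAntidiag Finset.univ n,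
      MvPolynomial.coeff m ((Nat.multinomial Finset.univ k : MvPolynomial (Fin t) ℕ) *
        ∏ i, X i ^ k i) =
      if k = ⇑m then Nat.multinomial Finset.univ k else 0 := by
    intro k _
    rw [prod_X_pow_univ, ← MvPolynomial.C_eq_coe_nat, MvPolynomial.coeff_C_mul,
      MvPolynomial.coeff_monomial]
    have h2 : (Finsupp.equivFunOnFinite.symm k = m) ↔ (k = ⇑m) := by
      constructor
      · intro h; rw [← h]; rfl
      · intro h; apply Finsupp.equivFunOnFinite.symm_apply_eq.mpr; ext i; simp [h]
    rw [if_congr h2 rfl rfl]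
    split <;> simp
  rw [Finset.sum_congr rfl key, Finset.sum_ite_eq' (piAntidiag Finset.univ n) (⇑m)]
  simp only [mem_piAntidiag]
  by_cases h : ∑ i, m i = n <;> simp [h]

theorem multinomial_vandermonde (t r : ℕ) (f : Fin t → ℕ) (hf : ∑ i, f i = 2 * r) :
    Nat.multinomial Finset.univ f =
      ∑ c ∈ (Fintype.piFinset fun i => Finset.range (f i + 1)).filter
          (fun c => ∑ i, c i = r),
        Nat.multinomial Finset.univ c *
          Nat.multinomial Finset.univ (fun i => f i - c i) := by
  classical
  set F : Fin t →₀ ℕ := Finsupp.equivFunOnFinite.symm f with hF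
  have hFc : ⇑F = f := rfl
  have hFsum : ∑ i, F i = 2 * r := by rw [hFc]; exact hf
  have key : MvPolynomial.coeff F ((∑ i, (X i : MvPolynomial (Fin t) ℕ)) ^ (2 * r)) =
      MvPolynomial.coeff F (((∑ i, (X i : MvPolynomial (Fin t) ℕ)) ^ r) *
        ((∑ i, (X i : MvPolynomial (Fin t) ℕ)) ^ r)) := by
    rw [← pow_add, two_mul]
  rw [coeff_sum_X_pow, if_pos hFsum, MvPolynomial.coeff_mul] at key
  rw [show Nat.multinomial Finset.univ f = Nat.multinomial Finset.univ (⇑F) from rfl, key]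
  have step : ∀ p ∈ Finset.HasAntidiagonal.antidiagonal F,
      MvPolynomial.coeff p.1 ((∑ i, (X i : MvPolynomial (Fin t) ℕ)) ^ r) *
        MvPolynomial.coeff p.2 ((∑ i, (X i : MvPolynomial (Fin t) ℕ)) ^ r) =
      if ∑ i, p.1 i = r then
        Nat.multinomial Finset.univ p.1 * Nat.multinomial Finset.univ p.2 else 0 := by
    intro p hp
    rw [Finset.HasAntidiagonal.mem_antidiagonal] at hp
    rw [coeff_sum_X_pow, coeff_sum_X_pow]
    by_cases h1 : ∑ i, p.1 i = r
    · have h2 : ∑ i, p.2 i = r := by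
        have : (∑ i, p.1 i) + ∑ i, p.2 i = 2 * r := by
          rw [← Finset.sum_add_distrib]
          rw [← hFsum]
          exact Finset.sum_congr rfl fun i _ => by
            rw [← hp]; simp
        omega
      rw [if_pos h1, if_pos h2, if_pos h1]
    · rw [if_neg h1, if_neg h1, zero_mul]
  rw [Finset.sum_congr rfl step, ← Finset.sum_filter]
  refine Finset.sum_nbij' (fun p => ⇑p.1)
    (fun c => (Finsupp.equivFunOnFinite.symm c, F - Finsupp.equivFunOnFinite.symm c))
    ?_ ?_ ?_ ?_ ?_
  · rintro ⟨p1, p2⟩ hp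
    simp only [Finset.mem_filter, Finset.HasAntidiagonal.mem_antidiagonal] at hp
    simp only [Finset.mem_filter, Fintype.mem_piFinset, Finset.mem_range]
    refine ⟨fun i => ?_, hp.2⟩
    have : p1 i + p2 i = f i := by rw [← hFc, ← hp.1]; simp
    omega
  · intro c hc
    simp only [Finset.mem_filter, Fintype.mem_piFinset, Finset.mem_range] at hc
    have hle : Finsupp.equivFunOnFinite.symm c ≤ F := by
      intro i
      have := hc.1 i
      show c i ≤ f i
      omega
    simp only [Finset.mem_filter, Finset.HasAntidiagonal.mem_antidiagonal]
    constructor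
    · exact add_tsub_cancel_of_le hle
    · exact hc.2
  · rintro ⟨p1, p2⟩ hp
    simp only [Finset.mem_filter, Finset.HasAntidiagonal.mem_antidiagonal] at hp
    have h1 : Finsupp.equivFunOnFinite.symm ⇑p1 = p1 := Finsupp.equivFunOnFinite.symm_apply_apply p1
    ext : 1
    · simp [h1]
    · simp only [h1]
      have : F - p1 = p2 := by rw [← hp.1]; simp
      simp [this]
  · intro c hc
    rfl
  · rintro ⟨p1, p2⟩ hp
    simp only [Finset.mem_filter, Finset.HasAntidiagonal.mem_antidiagonal] at hp
    congr 1
    apply Nat.multinomial_congr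
    intro i _
    have : p1 i + p2 i = f i := by rw [← hFc, ← hp.1]; simp
    show p2 i = f i - p1 i
    omega
end

section
/- Let t, r be natural numbers and let x : Fin t → ℝ be a function with x i ≥ 0 for all i. Then ∑ over all c : Fin t → ℕ with ∑ i, c i = r of (Nat.multinomial Finset.univ (fun i => 2 * c i) : ℝ) * ∏ i, (x i) ^ (c i) is at most ((2*r)! / (2 ^ r * r!)) * (∑ i, x i) ^ r. Equivalently, 2 ^ r * r! * ∑_{c : ∑ c i = r} ((2r)! / ∏ i, (2 * c i)!) * ∏ i, (x i)^(c i) ≤ (2r)! * (∑ i, x i) ^ r. -/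
theorem multinomial_double_sum_bound (t r : ℕ) (x : Fin t → ℝ) (hx : ∀ i, x i ≥ 0) :
    ∑ c ∈ (Fintype.piFinset fun _ : Fin t => Finset.range (r + 1)).filter
        (fun c => ∑ i, c i = r),
      (Nat.multinomial Finset.univ (fun i => 2 * c i) : ℝ) * ∏ i, (x i) ^ (c i)
    ≤ ((2 * r).factorial : ℝ) / (2 ^ r * (r.factorial : ℝ)) * (∑ i, x i) ^ r := by
  have hset : (Fintype.piFinset fun _ : Fin t => Finset.range (r + 1)).filter
      (fun c => ∑ i, c i = r) = Finset.piAntidiag Finset.univ r := by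
    ext c
    simp only [Finset.mem_filter, Fintype.mem_piFinset, Finset.mem_range,
      Finset.mem_piAntidiag, Finset.mem_univ, implies_true, and_true]
    constructor
    · rintro ⟨_, h⟩; exact h
    · intro h
      refine ⟨fun i => ?_, h⟩
      have : c i ≤ r := h ▸ Finset.single_le_sum (f := c) (fun _ _ => Nat.zero_le _)
        (Finset.mem_univ i)
      omega
  rw [hset, Finset.sum_pow_eq_sum_piAntidiag, Finset.mul_sum]
  apply Finset.sum_le_sum
  intro c hc
  rw [Finset.mem_piAntidiag] at hc
  obtain ⟨hsum, -⟩ := hc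
  have hxprod : (0:ℝ) ≤ ∏ i, (x i) ^ (c i) :=
    Finset.prod_nonneg fun i _ => pow_nonneg (hx i) _
  rw [← mul_assoc]
  apply mul_le_mul_of_nonneg_right _ hxprod
  -- key nat inequality
  have key : Nat.multinomial Finset.univ (fun i => 2 * c i) * (2 ^ r * r.factorial)
      ≤ (2 * r).factorial * Nat.multinomial Finset.univ c := by
    have h1 : (∏ i, (c i).factorial) * Nat.multinomial Finset.univ c = r.factorial := by
      have := Nat.multinomial_spec Finset.univ c
      rwa [hsum] at this
    have h2 : (∏ i, (2 * c i).factorial) * Nat.multinomial Finset.univ (fun i => 2 * c i)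
        = (2 * r).factorial := by
      have := Nat.multinomial_spec Finset.univ (fun i => 2 * c i)
      rwa [← Finset.mul_sum, hsum] at this
    have h3 : 2 ^ r * ∏ i, (c i).factorial ≤ ∏ i, (2 * c i).factorial := by
      have : 2 ^ r * ∏ i, (c i).factorial = ∏ i, 2 ^ (c i) * (c i).factorial := by
        rw [Finset.prod_mul_distrib, Finset.prod_pow_eq_pow_sum, hsum]
      rw [this]
      apply Finset.prod_le_prod' fun i _ => ?_
      rw [← Nat.doubleFactorial_two_mul]
      exact Nat.doubleFactorial_le_factorial _
    calc Nat.multinomial Finset.univ (fun i => 2 * c i) * (2 ^ r * r.factorial)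
        = (2 ^ r * ∏ i, (c i).factorial) * Nat.multinomial Finset.univ c
            * Nat.multinomial Finset.univ (fun i => 2 * c i) := by
          rw [mul_assoc (2^r), h1]; ring
      _ ≤ (∏ i, (2 * c i).factorial) * Nat.multinomial Finset.univ c
            * Nat.multinomial Finset.univ (fun i => 2 * c i) := by
          exact Nat.mul_le_mul_right _ (Nat.mul_le_mul_right _ h3)
      _ = (2 * r).factorial * Nat.multinomial Finset.univ c := by
          rw [mul_right_comm, h2]
  rw [div_mul_eq_mul_div, le_div_iff₀ (by positivity)]
  calc (Nat.multinomial Finset.univ (fun i => 2 * c i) : ℝ) * (2 ^ r * r.factorial)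
      = ((Nat.multinomial Finset.univ (fun i => 2 * c i) * (2 ^ r * r.factorial) : ℕ) : ℝ) := by
        push_cast; ring
    _ ≤ (((2 * r).factorial * Nat.multinomial Finset.univ c : ℕ) : ℝ) := by
        exact_mod_cast key
    _ = ((2 * r).factorial : ℝ) * (Nat.multinomial Finset.univ c) := by push_cast; ring
end

section
/- Let P ≥ 0 and ρ > 0 be real numbers and K a natural number. Then |∑_{r=0}^{K} (−P)^r / r! − exp(−P)| ≤ exp(−ρ * K) * exp(exp(ρ) * P). -/
set_option maxHeartbeats 1000000 in
theorem exp_truncation_error (P ρ : ℝ) (hP : 0 ≤ P) (hρ : 0 < ρ) (K : ℕ) :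
    |∑ r ∈ Finset.range (K + 1), (-P) ^ r / (Nat.factorial r : ℝ) - Real.exp (-P)| ≤
      Real.exp (-ρ * K) * Real.exp (Real.exp ρ * P) := by
  have hsum : Summable (fun n : ℕ => (-P) ^ n / (Nat.factorial n : ℝ)) :=
    Real.summable_pow_div_factorial (-P)
  have hexp : Real.exp (-P) = ∑' n : ℕ, (-P) ^ n / (Nat.factorial n : ℝ) := by
    rw [Real.exp_eq_exp_ℝ, NormedSpace.exp_eq_tsum_div]
  have hsplit := Summable.sum_add_tsum_nat_add (K + 1) hsum
  have herr : ∑ r ∈ Finset.range (K + 1), (-P) ^ r / (Nat.factorial r : ℝ) - Real.exp (-P)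
      = -(∑' n : ℕ, (-P) ^ (n + (K + 1)) / (Nat.factorial (n + (K + 1)) : ℝ)) := by
    rw [hexp]; linarith [hsplit]
  rw [herr, abs_neg]
  have htail : Summable (fun n : ℕ => (-P) ^ (n + (K + 1)) / (Nat.factorial (n + (K + 1)) : ℝ)) :=
    (summable_nat_add_iff (K + 1)).2 hsum
  have habs : |∑' n : ℕ, (-P) ^ (n + (K + 1)) / (Nat.factorial (n + (K + 1)) : ℝ)|
      ≤ ∑' n : ℕ, P ^ (n + (K + 1)) / (Nat.factorial (n + (K + 1)) : ℝ) := by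
    rw [← Real.norm_eq_abs]
    have hs : Summable (fun n : ℕ => ‖(-P) ^ (n + (K + 1)) / (Nat.factorial (n + (K + 1)) : ℝ)‖) := by
      simpa only [Real.norm_eq_abs] using htail.abs
    refine (norm_tsum_le_tsum_norm hs).trans_eq (tsum_congr fun n => ?_)
    rw [Real.norm_eq_abs, abs_div, abs_pow, abs_neg, abs_of_nonneg hP,
      abs_of_nonneg (Nat.cast_nonneg _)]
  refine habs.trans ?_
  -- bound each term by exp(-ρK) * (exp ρ * P)^m / m!
  have hgsum : Summable (fun n : ℕ => (Real.exp ρ * P) ^ n / (Nat.factorial n : ℝ)) :=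
    Real.summable_pow_div_factorial _
  have hgtail : Summable (fun n : ℕ =>
      Real.exp (-ρ * K) * ((Real.exp ρ * P) ^ (n + (K + 1)) / (Nat.factorial (n + (K + 1)) : ℝ))) :=
    ((summable_nat_add_iff (K + 1)).2 hgsum).mul_left _
  have hterm : ∀ n : ℕ, P ^ (n + (K + 1)) / (Nat.factorial (n + (K + 1)) : ℝ)
      ≤ Real.exp (-ρ * K) * ((Real.exp ρ * P) ^ (n + (K + 1)) / (Nat.factorial (n + (K + 1)) : ℝ)) := by
    intro n
    have h1 : (Real.exp ρ * P) ^ (n + (K + 1)) = Real.exp (ρ * (n + (K + 1))) * P ^ (n + (K + 1)) := by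
      have hc : ((n + (K + 1) : ℕ) : ℝ) * ρ = ρ * (n + (K + 1)) := by push_cast; ring
      rw [mul_pow, ← Real.exp_nat_mul, hc]
    rw [h1]
    have h2 : (1 : ℝ) ≤ Real.exp (-ρ * K) * Real.exp (ρ * (n + (K + 1))) := by
      rw [← Real.exp_add]
      refine Real.one_le_exp ?_
      have : (K : ℝ) ≤ (n : ℝ) + (K + 1) := by linarith [Nat.cast_nonneg (α := ℝ) n]
      nlinarith [hρ.le]
    have h3 : 0 ≤ P ^ (n + (K + 1)) / (Nat.factorial (n + (K + 1)) : ℝ) := by positivity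
    calc P ^ (n + (K + 1)) / (Nat.factorial (n + (K + 1)) : ℝ)
        = 1 * (P ^ (n + (K + 1)) / (Nat.factorial (n + (K + 1)) : ℝ)) := by ring
      _ ≤ (Real.exp (-ρ * K) * Real.exp (ρ * (n + (K + 1)))) *
            (P ^ (n + (K + 1)) / (Nat.factorial (n + (K + 1)) : ℝ)) := by
          exact mul_le_mul_of_nonneg_right h2 h3
      _ = Real.exp (-ρ * K) * (Real.exp (ρ * (n + (K + 1))) * P ^ (n + (K + 1)) / (Nat.factorial (n + (K + 1)) : ℝ)) := by ring
  have hPtail : Summable (fun n : ℕ => P ^ (n + (K + 1)) / (Nat.factorial (n + (K + 1)) : ℝ)) :=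
    (summable_nat_add_iff (K + 1)).2 (Real.summable_pow_div_factorial P)
  have step1 : (∑' n : ℕ, P ^ (n + (K + 1)) / (Nat.factorial (n + (K + 1)) : ℝ))
      ≤ ∑' n : ℕ, Real.exp (-ρ * K) * ((Real.exp ρ * P) ^ (n + (K + 1)) / (Nat.factorial (n + (K + 1)) : ℝ)) :=
    Summable.tsum_le_tsum hterm hPtail hgtail
  refine step1.trans ?_
  rw [tsum_mul_left]
  refine mul_le_mul_of_nonneg_left ?_ (Real.exp_nonneg _)
  have hgexp : Real.exp (Real.exp ρ * P) = ∑' n : ℕ, (Real.exp ρ * P) ^ n / (Nat.factorial n : ℝ) := by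
    rw [Real.exp_eq_exp_ℝ, NormedSpace.exp_eq_tsum_div]
  rw [hgexp]
  have hgsplit := Summable.sum_add_tsum_nat_add (K + 1) hgsum
  have hpart : 0 ≤ ∑ i ∈ Finset.range (K + 1), (Real.exp ρ * P) ^ i / (Nat.factorial i : ℝ) := by
    refine Finset.sum_nonneg fun i _ => ?_; positivity
  linarith [hgsplit]
end

section
/- Let ρ > 0, M ≥ 0 and P be real numbers with 0 ≤ P ≤ M, and let K be a natural number. Then ∑_{r=0}^{K} (−P)^r / r! ≥ exp(−P) * (1 − exp((exp(ρ) + 1) * M − ρ * K)). -/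
open Nat in
set_option maxHeartbeats 1000000 in
theorem exp_truncation_lower_bound (ρ M P : ℝ) (hρ : 0 < ρ) (hM : 0 ≤ M)
    (hP0 : 0 ≤ P) (hPM : P ≤ M) (K : ℕ) :
    ∑ r ∈ Finset.range (K + 1), (-P) ^ r / (Nat.factorial r : ℝ) ≥
      Real.exp (-P) * (1 - Real.exp ((Real.exp ρ + 1) * M - ρ * K)) := by
  have hf : Summable (fun n : ℕ => (-P) ^ n / (n ! : ℝ)) :=
    Real.summable_pow_div_factorial (-P)
  have hexp : Real.exp (-P) = ∑' n : ℕ, (-P) ^ n / (n ! : ℝ) := by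
    rw [Real.exp_eq_exp_ℝ, NormedSpace.exp_eq_tsum_div]
  have hsplit := Summable.sum_add_tsum_nat_add (K + 1) hf
  have hg : Summable (fun n : ℕ => (-P) ^ (n + (K + 1)) / ((n + (K + 1))! : ℝ)) :=
    (summable_nat_add_iff (f := fun n : ℕ => (-P) ^ n / (n ! : ℝ)) (K + 1)).2 hf
  have hPabs : Summable (fun n : ℕ => P ^ (n + (K + 1)) / ((n + (K + 1))! : ℝ)) :=
    (summable_nat_add_iff (f := fun n : ℕ => P ^ n / (n ! : ℝ)) (K + 1)).2
      (Real.summable_pow_div_factorial P)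
  -- tail bound
  have htail : |∑' n : ℕ, (-P) ^ (n + (K + 1)) / ((n + (K + 1))! : ℝ)| ≤
      Real.exp (Real.exp ρ * P - ρ * K) := by
    have h1 : |∑' n : ℕ, (-P) ^ (n + (K + 1)) / ((n + (K + 1))! : ℝ)| ≤
        ∑' n : ℕ, P ^ (n + (K + 1)) / ((n + (K + 1))! : ℝ) := by
      have hnorm := norm_tsum_le_tsum_norm
        (f := fun n : ℕ => (-P) ^ (n + (K + 1)) / ((n + (K + 1))! : ℝ)) (by
          have : (fun n : ℕ => ‖(-P) ^ (n + (K + 1)) / ((n + (K + 1))! : ℝ)‖) =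
              fun n : ℕ => P ^ (n + (K + 1)) / ((n + (K + 1))! : ℝ) := by
            funext n
            rw [Real.norm_eq_abs, abs_div, abs_pow, abs_neg, abs_of_nonneg hP0,
              abs_of_nonneg (by positivity : (0:ℝ) ≤ ((n + (K + 1))! : ℝ))]
          rw [this]; exact hPabs)
      have heq : (fun n : ℕ => ‖(-P) ^ (n + (K + 1)) / ((n + (K + 1))! : ℝ)‖) =
          fun n : ℕ => P ^ (n + (K + 1)) / ((n + (K + 1))! : ℝ) := by
        funext n
        rw [Real.norm_eq_abs, abs_div, abs_pow, abs_neg, abs_of_nonneg hP0,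
          abs_of_nonneg (by positivity : (0:ℝ) ≤ ((n + (K + 1))! : ℝ))]
      rw [heq] at hnorm
      simpa [Real.norm_eq_abs] using hnorm
    have hQ : Summable (fun n : ℕ => (P * Real.exp ρ) ^ n / (n ! : ℝ)) :=
      Real.summable_pow_div_factorial _
    have hQ' : Summable (fun n : ℕ => (P * Real.exp ρ) ^ (n + (K + 1)) / ((n + (K + 1))! : ℝ)) :=
      (summable_nat_add_iff (f := fun n : ℕ => (P * Real.exp ρ) ^ n / (n ! : ℝ)) (K + 1)).2 hQ
    have h2 : ∑' n : ℕ, P ^ (n + (K + 1)) / ((n + (K + 1))! : ℝ) ≤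
        Real.exp (-ρ * K) * ∑' n : ℕ, (P * Real.exp ρ) ^ (n + (K + 1)) / ((n + (K + 1))! : ℝ) := by
      rw [← tsum_mul_left]
      apply Summable.tsum_le_tsum _ hPabs (hQ'.mul_left _)
      intro n
      rw [mul_pow, mul_div_assoc, ← mul_assoc, ← Real.exp_nat_mul]
      have hone : (1:ℝ) ≤ Real.exp (-ρ * K) * Real.exp (((n + (K + 1) : ℕ) : ℝ) * ρ) := by
        rw [← Real.exp_add, Real.one_le_exp_iff]
        have h : (K:ℝ) ≤ ((n + (K + 1) : ℕ) : ℝ) := by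
          push_cast; linarith [Nat.cast_nonneg (α := ℝ) n]
        nlinarith
      have hnn : 0 ≤ P ^ (n + (K + 1)) / ((n + (K + 1))! : ℝ) := by positivity
      have h' := mul_le_mul_of_nonneg_left hone hnn
      rw [mul_one] at h'
      have heq2 : (P ^ (n + (K + 1)) / ((n + (K + 1))! : ℝ)) *
          (Real.exp (-ρ * K) * Real.exp (((n + (K + 1) : ℕ) : ℝ) * ρ)) =
          Real.exp (-ρ * K) * P ^ (n + (K + 1)) *
            (Real.exp (((n + (K + 1) : ℕ) : ℝ) * ρ) / ((n + (K + 1))! : ℝ)) := by ring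
      linarith [heq2 ▸ h']
    have h3 : ∑' n : ℕ, (P * Real.exp ρ) ^ (n + (K + 1)) / ((n + (K + 1))! : ℝ) ≤
        Real.exp (P * Real.exp ρ) := by
      have hsplit2 := Summable.sum_add_tsum_nat_add (K + 1) hQ
      have hpos : 0 ≤ ∑ i ∈ Finset.range (K + 1), (P * Real.exp ρ) ^ i / (i ! : ℝ) := by
        apply Finset.sum_nonneg; intro i _; positivity
      have hE : Real.exp (P * Real.exp ρ) = ∑' n : ℕ, (P * Real.exp ρ) ^ n / (n ! : ℝ) := by
        rw [Real.exp_eq_exp_ℝ, NormedSpace.exp_eq_tsum_div]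
      linarith [hsplit2, hE.ge]
    calc |∑' n : ℕ, (-P) ^ (n + (K + 1)) / ((n + (K + 1))! : ℝ)|
        ≤ Real.exp (-ρ * K) * Real.exp (P * Real.exp ρ) := by
          have hEnn : (0:ℝ) ≤ Real.exp (-ρ * K) := (Real.exp_pos _).le
          calc |∑' n : ℕ, (-P) ^ (n + (K + 1)) / ((n + (K + 1))! : ℝ)|
              ≤ Real.exp (-ρ * K) *
                ∑' n : ℕ, (P * Real.exp ρ) ^ (n + (K + 1)) / ((n + (K + 1))! : ℝ) :=
                le_trans h1 h2
            _ ≤ Real.exp (-ρ * K) * Real.exp (P * Real.exp ρ) :=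
                mul_le_mul_of_nonneg_left h3 hEnn
      _ = Real.exp (Real.exp ρ * P - ρ * K) := by
          rw [← Real.exp_add]; ring_nf
  have key : Real.exp (Real.exp ρ * P - ρ * K) ≤
      Real.exp (-P) * Real.exp ((Real.exp ρ + 1) * M - ρ * K) := by
    rw [← Real.exp_add, Real.exp_le_exp]
    nlinarith [Real.exp_pos ρ, Real.one_le_exp_iff.2 hρ.le]
  have habs := abs_le.1 htail
  rw [ge_iff_le, mul_sub, mul_one]
  have hrw : ∑ r ∈ Finset.range (K + 1), (-P) ^ r / (r ! : ℝ) =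
      Real.exp (-P) - ∑' n : ℕ, (-P) ^ (n + (K + 1)) / ((n + (K + 1))! : ℝ) := by
    rw [hexp, ← hsplit]; ring
  rw [hrw]
  linarith [habs.2, key]
end

section
/- Let a, b > 0 be real numbers and V ∈ ℝ. Then the sum over all integers u ∈ ℤ of exp(−u²/(2a) − (V − u)²/(2b)) converges and satisfies ∑_{u ∈ ℤ} exp(−u²/(2a) − (V − u)²/(2b)) ≤ (1 + Real.sqrt (2 * π * a * b / (a + b))) * exp(−V²/(2*(a + b))). -/
open MeasureTheory Set

private lemma gauss_cont (c t : ℝ) : Continuous fun x : ℝ => Real.exp (-c * (x - t) ^ 2) :=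
  Real.continuous_exp.comp (by continuity)

private lemma gauss_step_right (c t y : ℝ) (hc : 0 < c) (hy : t ≤ y) :
    Real.exp (-c * (y + 1 - t) ^ 2) ≤ ∫ x in y..(y + 1), Real.exp (-c * (x - t) ^ 2) := by
  have h := intervalIntegral.integral_mono_on (a := y) (b := y + 1) (μ := volume)
    (f := fun _ : ℝ => Real.exp (-c * (y + 1 - t) ^ 2))
    (g := fun x : ℝ => Real.exp (-c * (x - t) ^ 2))
    (by linarith) intervalIntegrable_const
    ((gauss_cont c t).intervalIntegrable _ _)
    (fun x hx => by
      obtain ⟨h1, h2⟩ := hx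
      apply Real.exp_le_exp.2
      nlinarith [mul_nonneg (by linarith : (0:ℝ) ≤ y + 1 - x)
        (by linarith : (0:ℝ) ≤ y + 1 + x - 2 * t)])
  simpa using h

private lemma gauss_step_left (c t y : ℝ) (hc : 0 < c) (hy : y + 1 ≤ t) :
    Real.exp (-c * (y - t) ^ 2) ≤ ∫ x in y..(y + 1), Real.exp (-c * (x - t) ^ 2) := by
  have h := intervalIntegral.integral_mono_on (a := y) (b := y + 1) (μ := volume)
    (f := fun _ : ℝ => Real.exp (-c * (y - t) ^ 2))
    (g := fun x : ℝ => Real.exp (-c * (x - t) ^ 2))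
    (by linarith) intervalIntegrable_const
    ((gauss_cont c t).intervalIntegrable _ _)
    (fun x hx => by
      obtain ⟨h1, h2⟩ := hx
      apply Real.exp_le_exp.2
      nlinarith [mul_nonneg (by linarith : (0:ℝ) ≤ x - y)
        (by linarith : (0:ℝ) ≤ 2 * t - x - y)])
  simpa using h

private lemma gauss_sum_bound (c t : ℝ) (hc : 0 < c) (ht0 : 0 ≤ t) (ht1 : t ≤ 1) :
    Summable (fun n : ℤ => Real.exp (-c * ((n : ℝ) - t) ^ 2)) ∧
    ∑' n : ℤ, Real.exp (-c * ((n : ℝ) - t) ^ 2) ≤ 1 + Real.sqrt (Real.pi / c) := by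
  set f : ℝ → ℝ := fun x => Real.exp (-c * (x - t) ^ 2) with hf
  have hcont : Continuous f := gauss_cont c t
  have hnn : ∀ x, 0 ≤ f x := fun x => (Real.exp_pos _).le
  have hle1 : ∀ x, f x ≤ 1 := fun x => by
    rw [hf]
    simp only []
    rw [show (1:ℝ) = Real.exp 0 by simp]
    exact Real.exp_le_exp.2 (by nlinarith [sq_nonneg (x - t)])
  have hint : Integrable f := by
    have h0 : Integrable fun x : ℝ => Real.exp (-c * x ^ 2) := integrable_exp_neg_mul_sq hc
    exact h0.comp_sub_right t
  have hItot : ∫ x, f x = Real.sqrt (Real.pi / c) := by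
    rw [← integral_gaussian c]
    exact MeasureTheory.integral_sub_right_eq_self (fun y => Real.exp (-c * y ^ 2)) t
  -- positive tail : ∑_{k} f (k+2) ≤ ∫_{Ioi 1} f
  have hpos_partial : ∀ N : ℕ, ∑ k ∈ Finset.range N, f ((k : ℝ) + 2) ≤ ∫ x in Ioi (1:ℝ), f x := by
    intro N
    have h1 : ∑ k ∈ Finset.range N, f ((k : ℝ) + 2) ≤
        ∑ k ∈ Finset.range N, ∫ x in ((k : ℝ) + 1)..((k : ℝ) + 2), f x := by
      apply Finset.sum_le_sum
      intro k _
      have := gauss_step_right c t ((k : ℝ) + 1) hc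
        (by have : (0:ℝ) ≤ (k : ℝ) := Nat.cast_nonneg k; linarith)
      have e : (k : ℝ) + 1 + 1 = (k : ℝ) + 2 := by ring
      rw [e] at this
      exact this
    have h2 : ∑ k ∈ Finset.range N, ∫ x in ((k : ℝ) + 1)..((k : ℝ) + 2), f x =
        ∫ x in (1:ℝ)..((N : ℝ) + 1), f x := by
      have := intervalIntegral.sum_integral_adjacent_intervals (μ := volume) (f := f)
        (a := fun k : ℕ => (k : ℝ) + 1) (n := N)
        (fun k _ => hcont.intervalIntegrable _ _)
      simp only [Nat.cast_zero, zero_add] at this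
      rw [← this]
      apply Finset.sum_congr rfl
      intro k _
      congr 1
      push_cast
      ring
    have h3 : ∫ x in (1:ℝ)..((N : ℝ) + 1), f x ≤ ∫ x in Ioi (1:ℝ), f x := by
      rw [intervalIntegral.integral_of_le (by have : (0:ℝ) ≤ (N : ℝ) := Nat.cast_nonneg N; linarith)]
      exact setIntegral_mono_set hint.integrableOn (ae_of_all _ hnn)
        (HasSubset.Subset.eventuallyLE Ioc_subset_Ioi_self)
    linarith
  -- negative tail : ∑_{k} f (-(k+1)) ≤ ∫_{Iic 0} f
  have hneg_partial : ∀ N : ℕ, ∑ k ∈ Finset.range N, f (-(k : ℝ) - 1) ≤ ∫ x in Iic (0:ℝ), f x := by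
    intro N
    have h1 : ∑ k ∈ Finset.range N, f (-(k : ℝ) - 1) ≤
        ∑ k ∈ Finset.range N, ∫ x in (-(k : ℝ) - 1)..(-(k : ℝ)), f x := by
      apply Finset.sum_le_sum
      intro k _
      have := gauss_step_left c t (-(k : ℝ) - 1) hc
        (by have : (0:ℝ) ≤ (k : ℝ) := Nat.cast_nonneg k; linarith)
      have e : -(k : ℝ) - 1 + 1 = -(k : ℝ) := by ring
      rw [e] at this
      exact this
    have h2 : ∀ M : ℕ, ∑ k ∈ Finset.range M, ∫ x in (-(k : ℝ) - 1)..(-(k : ℝ)), f x =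
        ∫ x in (-(M : ℝ))..(0:ℝ), f x := by
      intro M
      induction M with
      | zero => simp
      | succ n ih =>
        rw [Finset.sum_range_succ, ih, add_comm]
        have := intervalIntegral.integral_add_adjacent_intervals (μ := volume) (f := f)
          (a := -(n : ℝ) - 1) (b := -(n : ℝ)) (c := 0)
          (hcont.intervalIntegrable _ _) (hcont.intervalIntegrable _ _)
        rw [this]
        congr 1
        push_cast
        ring
    have h3 : ∫ x in (-(N : ℝ))..(0:ℝ), f x ≤ ∫ x in Iic (0:ℝ), f x := by
      rw [intervalIntegral.integral_of_le (by have : (0:ℝ) ≤ (N : ℝ) := Nat.cast_nonneg N; linarith)]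
      exact setIntegral_mono_set hint.integrableOn (ae_of_all _ hnn)
        (HasSubset.Subset.eventuallyLE Ioc_subset_Iic_self)
    rw [h2] at h1
    linarith
  -- middle : f 0 + f 1 ≤ 1 + ∫_0^1 f
  have hmid : f 0 + f 1 ≤ 1 + ∫ x in (0:ℝ)..1, f x := by
    have hsplit : ∫ x in (0:ℝ)..1, f x = (∫ x in (0:ℝ)..t, f x) + ∫ x in t..(1:ℝ), f x :=
      (intervalIntegral.integral_add_adjacent_intervals
        (hcont.intervalIntegrable _ _) (hcont.intervalIntegrable _ _)).symm
    have hlow : t * f 0 ≤ ∫ x in (0:ℝ)..t, f x := by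
      have h := intervalIntegral.integral_mono_on (a := (0:ℝ)) (b := t) (μ := volume)
        (f := fun _ : ℝ => f 0) (g := f) ht0 intervalIntegrable_const
        (hcont.intervalIntegrable _ _)
        (fun x hx => by
          obtain ⟨h1, h2⟩ := hx
          apply Real.exp_le_exp.2
          nlinarith [mul_nonneg h1 (by linarith : (0:ℝ) ≤ 2 * t - x)])
      simpa [smul_eq_mul] using h
    have hhigh : (1 - t) * f 1 ≤ ∫ x in t..(1:ℝ), f x := by
      have h := intervalIntegral.integral_mono_on (a := t) (b := (1:ℝ)) (μ := volume)
        (f := fun _ : ℝ => f 1) (g := f) ht1 intervalIntegrable_const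
        (hcont.intervalIntegrable _ _)
        (fun x hx => by
          obtain ⟨h1, h2⟩ := hx
          apply Real.exp_le_exp.2
          nlinarith [mul_nonneg (by linarith : (0:ℝ) ≤ 1 - x)
            (by linarith : (0:ℝ) ≤ 1 + x - 2 * t)])
      simpa [smul_eq_mul] using h
    have hf0 : f 0 ≤ 1 := hle1 0
    have hf1 : f 1 ≤ 1 := hle1 1
    have hf0n : 0 ≤ f 0 := hnn 0
    have hf1n : 0 ≤ f 1 := hnn 1
    nlinarith [mul_nonneg (by linarith : (0:ℝ) ≤ 1 - t) (by linarith : (0:ℝ) ≤ 1 - f 0),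
      mul_nonneg ht0 (by linarith : (0:ℝ) ≤ 1 - f 1)]
  -- summability and tsum bounds for the two halves
  have hsum_postail : Summable fun k : ℕ => f ((k : ℝ) + 2) :=
    summable_of_sum_range_le (fun n => hnn _) hpos_partial
  have htsum_postail : ∑' k : ℕ, f ((k : ℝ) + 2) ≤ ∫ x in Ioi (1:ℝ), f x :=
    Real.tsum_le_of_sum_range_le (fun n => hnn _) hpos_partial
  have hsum_neg : Summable fun k : ℕ => f (-(k : ℝ) - 1) :=
    summable_of_sum_range_le (fun n => hnn _) hneg_partial
  have htsum_neg : ∑' k : ℕ, f (-(k : ℝ) - 1) ≤ ∫ x in Iic (0:ℝ), f x :=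
    Real.tsum_le_of_sum_range_le (fun n => hnn _) hneg_partial
  -- positive half
  have hsum_pos : Summable fun k : ℕ => f (k : ℝ) := by
    rw [← summable_nat_add_iff 2]
    convert hsum_postail using 2 with k
    push_cast
    · rfl
    · rw [Nat.cast_add, Nat.cast_ofNat]
  have htsum_pos : ∑' k : ℕ, f (k : ℝ) ≤ f 0 + f 1 + ∫ x in Ioi (1:ℝ), f x := by
    have key := Summable.sum_add_tsum_nat_add (f := fun k : ℕ => f (k : ℝ)) 2 hsum_pos
    have heq : (∑' k : ℕ, f ((k + 2 : ℕ) : ℝ)) = ∑' k : ℕ, f ((k : ℝ) + 2) := by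
      apply tsum_congr
      intro k
      push_cast
      ring_nf
    rw [Finset.sum_range_succ, Finset.sum_range_one] at key
    simp only [Nat.cast_zero, Nat.cast_one] at key
    rw [← key, heq]
    linarith
  -- assemble over ℤ
  have hcomp_pos : (fun k : ℕ => f ((k : ℤ) : ℝ)) = fun k : ℕ => f (k : ℝ) := by
    funext k; push_cast; rfl
  have hcomp_neg : (fun k : ℕ => f (((-(k + 1) : ℤ)) : ℝ)) = fun k : ℕ => f (-(k : ℝ) - 1) := by
    funext k; push_cast; ring_nf
  have hsummable : Summable (fun n : ℤ => f ((n : ℝ))) := by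
    apply Summable.of_nat_of_neg_add_one
    · rw [show (fun n : ℕ => f ((n : ℤ) : ℝ)) = fun k : ℕ => f (k : ℝ) from hcomp_pos]
      exact hsum_pos
    · rw [show (fun n : ℕ => f (((-(n + 1) : ℤ)) : ℝ)) = fun k : ℕ => f (-(k : ℝ) - 1) from
        hcomp_neg]
      exact hsum_neg
  have htsum : ∑' n : ℤ, f ((n : ℝ)) ≤ 1 + Real.sqrt (Real.pi / c) := by
    have hsummable' := hsummable
    have hdecomp := tsum_of_nat_of_neg_add_one (f := fun n : ℤ => f ((n : ℝ)))
      (by rw [show (fun n : ℕ => f ((n : ℤ) : ℝ)) = fun k : ℕ => f (k : ℝ) from hcomp_pos]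
          exact hsum_pos)
      (by rw [show (fun n : ℕ => f (((-(n + 1) : ℤ)) : ℝ)) = fun k : ℕ => f (-(k : ℝ) - 1) from
            hcomp_neg]
          exact hsum_neg)
    rw [hdecomp]
    have e1 : (∑' n : ℕ, f ((n : ℤ) : ℝ)) = ∑' k : ℕ, f (k : ℝ) := by rw [hcomp_pos]
    have e2 : (∑' n : ℕ, f (((-(n + 1) : ℤ)) : ℝ)) = ∑' k : ℕ, f (-(k : ℝ) - 1) := by
      rw [hcomp_neg]
    rw [e1, e2]
    have hIsplit : (∫ x in Iic (0:ℝ), f x) + (∫ x in (0:ℝ)..1, f x) + (∫ x in Ioi (1:ℝ), f x) =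
        ∫ x, f x := by
      have h1 := intervalIntegral.integral_Iic_sub_Iic (μ := volume) (f := f) (a := (0:ℝ)) (b := (1:ℝ))
        hint.integrableOn hint.integrableOn
      have h2 := intervalIntegral.integral_Iic_add_Ioi (μ := volume) (f := f) (b := (1:ℝ))
        hint.integrableOn hint.integrableOn
      linarith
    rw [hItot] at hIsplit
    linarith
  exact ⟨hsummable, htsum⟩

theorem gaussian_convolution_sum_bound (a b V : ℝ) (ha : 0 < a) (hb : 0 < b) :
    Summable (fun u : ℤ =>
      Real.exp (-(u : ℝ) ^ 2 / (2 * a) - (V - (u : ℝ)) ^ 2 / (2 * b))) ∧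
    ∑' u : ℤ, Real.exp (-(u : ℝ) ^ 2 / (2 * a) - (V - (u : ℝ)) ^ 2 / (2 * b)) ≤
      (1 + Real.sqrt (2 * Real.pi * a * b / (a + b))) *
        Real.exp (-V ^ 2 / (2 * (a + b))) := by
  have hab : 0 < a + b := by linarith
  set c : ℝ := (a + b) / (2 * a * b) with hc_def
  have hc : 0 < c := by positivity
  set μ : ℝ := a * V / (a + b) with hμ_def
  set m : ℤ := ⌊μ⌋ with hm_def
  set t : ℝ := μ - m with ht_def
  have ht0 : 0 ≤ t := by
    have := Int.floor_le μ
    simp only [ht_def]; linarith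
  have ht1 : t ≤ 1 := by
    have := Int.lt_floor_add_one μ
    simp only [ht_def]; linarith
  obtain ⟨hS, hB⟩ := gauss_sum_bound c t hc ht0 ht1
  -- translate : exp(-c((n+m)-μ)²) = exp(-c(n-t)²)
  have hterm : ∀ u : ℤ,
      Real.exp (-(u : ℝ) ^ 2 / (2 * a) - (V - (u : ℝ)) ^ 2 / (2 * b)) =
      Real.exp (-V ^ 2 / (2 * (a + b))) * Real.exp (-c * ((u : ℝ) - μ) ^ 2) := by
    intro u
    rw [← Real.exp_add]
    congr 1
    rw [hc_def, hμ_def]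
    field_simp
    ring
  have hshift : ∀ n : ℤ, Real.exp (-c * (((n + m : ℤ) : ℝ) - μ) ^ 2) =
      Real.exp (-c * ((n : ℝ) - t) ^ 2) := by
    intro n
    congr 1
    push_cast [ht_def]
    ring
  have hSμ : Summable (fun u : ℤ => Real.exp (-c * ((u : ℝ) - μ) ^ 2)) := by
    have := (Equiv.addRight m).summable_iff
      (f := fun u : ℤ => Real.exp (-c * ((u : ℝ) - μ) ^ 2))
    rw [← this]
    convert hS using 1
    funext n
    simpa using hshift n
  have hBμ : ∑' u : ℤ, Real.exp (-c * ((u : ℝ) - μ) ^ 2) ≤ 1 + Real.sqrt (Real.pi / c) := by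
    have heq := (Equiv.addRight m).tsum_eq (f := fun u : ℤ => Real.exp (-c * ((u : ℝ) - μ) ^ 2))
    rw [← heq]
    calc ∑' n : ℤ, Real.exp (-c * (((Equiv.addRight m) n : ℝ) - μ) ^ 2)
        = ∑' n : ℤ, Real.exp (-c * ((n : ℝ) - t) ^ 2) := by
          apply tsum_congr
          intro n
          simpa using hshift n
      _ ≤ 1 + Real.sqrt (Real.pi / c) := hB
  have hsqrt : Real.sqrt (Real.pi / c) = Real.sqrt (2 * Real.pi * a * b / (a + b)) := by
    congr 1
    rw [hc_def]
    field_simp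
  constructor
  · simp only [hterm]
    exact hSμ.mul_left _
  · calc ∑' u : ℤ, Real.exp (-(u : ℝ) ^ 2 / (2 * a) - (V - (u : ℝ)) ^ 2 / (2 * b))
        = ∑' u : ℤ, Real.exp (-V ^ 2 / (2 * (a + b))) * Real.exp (-c * ((u : ℝ) - μ) ^ 2) := by
          apply tsum_congr; intro u; exact hterm u
      _ = Real.exp (-V ^ 2 / (2 * (a + b))) * ∑' u : ℤ, Real.exp (-c * ((u : ℝ) - μ) ^ 2) :=
          tsum_mul_left
      _ ≤ Real.exp (-V ^ 2 / (2 * (a + b))) * (1 + Real.sqrt (Real.pi / c)) := by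
          apply mul_le_mul_of_nonneg_left hBμ (Real.exp_pos _).le
      _ = (1 + Real.sqrt (2 * Real.pi * a * b / (a + b))) *
            Real.exp (-V ^ 2 / (2 * (a + b))) := by
          rw [hsqrt]; ring
end

section
/- Let δ > 0, m > 0 and T ≥ 0 be real numbers. Then the sum over all pairs of integers (u, v) ∈ ℤ × ℤ with u + v ≤ −T of exp(δ * (u + v) − v²/m) converges and satisfies ∑_{(u,v) ∈ ℤ², u + v ≤ −T} exp(δ*(u + v) − v²/m) ≤ (exp(−δ*T) / (1 − exp(−δ))) * (1 + Real.sqrt (π * m)). -/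
open MeasureTheory Set

-- key nat gaussian sum bound
lemma gauss_nat_sum_le (m : ℝ) (hm : 0 < m) (a : ℕ) :
    ∑ i ∈ Finset.range a, Real.exp (-(((i:ℝ)+1)^2) / m) ≤ Real.sqrt (Real.pi * m) / 2 := by
  set f : ℝ → ℝ := fun x => Real.exp (-(x^2) / m) with hf
  have hanti : AntitoneOn f (Icc (0:ℝ) (0 + a)) := by
    intro x hx y hy hxy
    have : x^2 ≤ y^2 := by nlinarith [hx.1]
    exact Real.exp_le_exp.2 (by rw [div_le_div_iff_of_pos_right hm] at *; linarith)
  have h1 : ∑ i ∈ Finset.range a, f (0 + (i + 1 : ℕ)) ≤ ∫ x in (0:ℝ)..(0 + a), f x :=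
    hanti.sum_le_integral
  have hint : IntegrableOn f (Ioi (0:ℝ)) := by
    have := (integrable_exp_neg_mul_sq (b := 1/m) (by positivity)).integrableOn (s := Ioi (0:ℝ))
    refine this.congr_fun (fun x _ => ?_) measurableSet_Ioi
    simp only [hf, neg_div, div_eq_mul_inv]
    ring_nf
  have h2 : ∫ x in (0:ℝ)..(0 + a), f x ≤ ∫ x in Ioi (0:ℝ), f x := by
    rw [intervalIntegral.integral_of_le (by positivity)]
    refine setIntegral_mono_set hint ?_ ?_
    · filter_upwards with x; positivity
    · filter_upwards with x hx; exact hx.1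
  have h3 : ∫ x in Ioi (0:ℝ), f x = Real.sqrt (Real.pi * m) / 2 := by
    have h := integral_gaussian_Ioi (1/m)
    rw [div_div_eq_mul_div, div_one] at h
    rw [← h]
    refine setIntegral_congr_fun measurableSet_Ioi (fun x _ => ?_)
    rw [hf]; ring_nf
  calc ∑ i ∈ Finset.range a, Real.exp (-(((i:ℝ)+1)^2) / m)
      = ∑ i ∈ Finset.range a, f (0 + (i + 1 : ℕ)) := by
        refine Finset.sum_congr rfl fun i _ => ?_
        simp [hf]
    _ ≤ _ := h1.trans (h2.trans_eq h3)

theorem gaussian_barrier_sum_bound (δ m T : ℝ) (hδ : 0 < δ) (hm : 0 < m) (hT : 0 ≤ T) :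
    Summable (fun p : ℤ × ℤ =>
      if (p.1 : ℝ) + (p.2 : ℝ) ≤ -T then
        Real.exp (δ * ((p.1 : ℝ) + (p.2 : ℝ)) - (p.2 : ℝ) ^ 2 / m) else 0) ∧
    ∑' p : ℤ × ℤ,
      (if (p.1 : ℝ) + (p.2 : ℝ) ≤ -T then
        Real.exp (δ * ((p.1 : ℝ) + (p.2 : ℝ)) - (p.2 : ℝ) ^ 2 / m) else 0) ≤
      Real.exp (-δ * T) / (1 - Real.exp (-δ)) * (1 + Real.sqrt (Real.pi * m)) := by
  set g : ℤ → ℝ := fun s => if (s : ℝ) ≤ -T then Real.exp (δ * s) else 0 with hgdef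
  set h : ℤ → ℝ := fun v => Real.exp (-((v:ℝ)^2) / m) with hhdef
  -- h summable and bounded
  have hS : ∀ n : ℕ, 0 ≤ Real.exp (-(((n:ℝ)+1)^2) / m) := fun n => Real.exp_nonneg _
  have hsum1 : Summable (fun n : ℕ => Real.exp (-(((n:ℝ)+1)^2) / m)) :=
    summable_of_sum_range_le hS (fun a => gauss_nat_sum_le m hm a)
  have htsum1 : ∑' n : ℕ, Real.exp (-(((n:ℝ)+1)^2) / m) ≤ Real.sqrt (Real.pi * m) / 2 :=
    Summable.tsum_le_of_sum_range_le hsum1 (fun a => gauss_nat_sum_le m hm a)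
  have hpos_eq : ∀ n : ℕ, h ((n:ℤ)+1) = Real.exp (-(((n:ℝ)+1)^2) / m) := by
    intro n; simp [hhdef]
  have hneg_eq : ∀ n : ℕ, h (-((n:ℤ)+1)) = Real.exp (-(((n:ℝ)+1)^2) / m) := by
    intro n; simp only [hhdef]; push_cast; ring_nf
  have hsum_pos : Summable (fun n : ℕ => h ((n:ℤ)+1)) := by
    simpa only [hpos_eq] using hsum1
  have hsum_natz : Summable (fun n : ℕ => h (n:ℤ)) := by
    rw [← summable_nat_add_iff 1]
    exact hsum_pos.congr (fun n => by push_cast; ring_nf)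
  have hsum_neg : Summable (fun n : ℕ => h (-((n:ℤ)+1))) := by
    simpa only [hneg_eq] using hsum1
  have hsumh : Summable h := Summable.of_nat_of_neg_add_one hsum_natz hsum_neg
  have htsumh : ∑' v : ℤ, h v ≤ 1 + Real.sqrt (Real.pi * m) := by
    rw [tsum_of_nat_of_neg_add_one hsum_natz hsum_neg]
    have e1 : ∑' n : ℕ, h (n:ℤ) = h 0 + ∑' n : ℕ, h ((n:ℤ)+1) := by
      rw [Summable.tsum_eq_zero_add hsum_natz]
      congr 1
    have h0 : h 0 = 1 := by simp [hhdef]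
    have t1 : ∑' n : ℕ, h ((n:ℤ)+1) ≤ Real.sqrt (Real.pi * m) / 2 := by
      calc ∑' n : ℕ, h ((n:ℤ)+1) = ∑' n : ℕ, Real.exp (-(((n:ℝ)+1)^2) / m) :=
            tsum_congr hpos_eq
        _ ≤ _ := htsum1
    have t2 : ∑' n : ℕ, h (-((n:ℤ)+1)) ≤ Real.sqrt (Real.pi * m) / 2 := by
      calc ∑' n : ℕ, h (-((n:ℤ)+1)) = ∑' n : ℕ, Real.exp (-(((n:ℝ)+1)^2) / m) :=
            tsum_congr hneg_eq
        _ ≤ _ := htsum1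
    rw [e1, h0]
    linarith
  -- g part
  set N : ℤ := ⌈T⌉ with hNdef
  have hNT : T ≤ (N:ℝ) := Int.le_ceil T
  have hN0 : (0:ℤ) ≤ N := Int.ceil_nonneg hT
  have hiff : ∀ s : ℤ, ((s : ℝ) ≤ -T ↔ s ≤ -N) := by
    intro s
    constructor
    · intro hs
      have h1 : T ≤ ((-s : ℤ):ℝ) := by push_cast; linarith
      have := Int.ceil_le.mpr h1
      omega
    · intro hs
      have h1 : N ≤ -s := by omega
      have h2 : T ≤ ((-s:ℤ):ℝ) := le_trans hNT (by exact_mod_cast h1)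
      push_cast at h2; linarith
  have hr1 : Real.exp (-δ) < 1 := Real.exp_lt_one_iff.mpr (by linarith)
  have hr0 : 0 ≤ Real.exp (-δ) := Real.exp_nonneg _
  set i : ℕ → ℤ := fun n => -N - n with hidef
  have hi_inj : Function.Injective i := by
    intro a b hab
    simp only [hidef, sub_right_inj] at hab
    exact_mod_cast hab
  have hi_supp : Function.support g ⊆ Set.range i := by
    intro s hs
    have : (s:ℝ) ≤ -T := by
      by_contra hc
      simp [hgdef, hc] at hs
    have hsN : s ≤ -N := (hiff s).mp this
    refine ⟨(-N - s).toNat, ?_⟩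
    simp only [hidef]
    rw [Int.toNat_of_nonneg (by omega)]
    omega
  have hgi : ∀ n : ℕ, g (i n) = Real.exp (-δ * N) * Real.exp (-δ) ^ n := by
    intro n
    have hle : ((i n : ℤ) : ℝ) ≤ -T := by
      apply (hiff _).mpr
      simp only [hidef]
      omega
    simp only [hgdef, hle, if_pos]
    rw [← Real.exp_nat_mul, ← Real.exp_add]
    congr 1
    simp only [hidef]
    push_cast
    ring
  have hsum_gi : Summable (fun n : ℕ => g (i n)) := by
    simp only [hgi]
    exact (summable_geometric_of_lt_one hr0 hr1).mul_left _
  have hsumg : Summable g := (hi_inj.summable_iff (fun s hs => by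
    by_contra hc
    exact hs (hi_supp hc))).mp hsum_gi
  have htsumg : ∑' s : ℤ, g s ≤ Real.exp (-δ * T) / (1 - Real.exp (-δ)) := by
    rw [← hi_inj.tsum_eq hi_supp]
    have : ∑' n : ℕ, g (i n) = Real.exp (-δ * N) * (1 - Real.exp (-δ))⁻¹ := by
      rw [tsum_congr hgi, tsum_mul_left, tsum_geometric_of_lt_one hr0 hr1]
    rw [this, div_eq_mul_inv]
    have hinv : 0 ≤ (1 - Real.exp (-δ))⁻¹ := by
      apply inv_nonneg.mpr; linarith
    apply mul_le_mul_of_nonneg_right _ hinv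
    apply Real.exp_le_exp.mpr
    nlinarith
  -- combination
  set F : ℤ × ℤ → ℝ := fun p =>
      if (p.1 : ℝ) + (p.2 : ℝ) ≤ -T then
        Real.exp (δ * ((p.1 : ℝ) + (p.2 : ℝ)) - (p.2 : ℝ) ^ 2 / m) else 0 with hFdef
  set G : ℤ × ℤ → ℝ := fun q => g q.1 * h q.2 with hGdef
  have hg_nonneg : ∀ s, 0 ≤ g s := by
    intro s; simp only [hgdef]; split
    · exact Real.exp_nonneg _
    · exact le_refl 0
  have hh_nonneg : ∀ v, 0 ≤ h v := fun v => Real.exp_nonneg _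
  have hsumG : Summable G := hsumg.mul_of_nonneg hsumh hg_nonneg hh_nonneg
  set e : ℤ × ℤ ≃ ℤ × ℤ :=
    ⟨fun p => (p.1 + p.2, p.2), fun q => (q.1 - q.2, q.2),
     fun p => by simp, fun q => by simp⟩ with hedef
  have hFe : ∀ p : ℤ × ℤ, F p = G (e p) := by
    intro p
    by_cases hp : (p.1 : ℝ) + (p.2 : ℝ) ≤ -T
    · have hp' : ((p.1 + p.2 : ℤ) : ℝ) ≤ -T := by push_cast; exact hp
      simp only [hFdef, hGdef, hedef, hgdef, hhdef, Equiv.coe_fn_mk, if_pos hp, if_pos hp']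
      rw [← Real.exp_add]
      congr 1
      push_cast
      ring
    · have hp' : ¬ ((p.1 + p.2 : ℤ) : ℝ) ≤ -T := by push_cast; exact hp
      simp only [hFdef, hGdef, hedef, hgdef, hhdef, Equiv.coe_fn_mk, if_neg hp, if_neg hp',
        zero_mul]
  have hsumF : Summable F := by
    refine (Summable.congr ?_ (fun p => (hFe p).symm))
    exact (e.summable_iff (f := G)).mpr hsumG
  refine ⟨hsumF, ?_⟩
  have htF : ∑' p : ℤ × ℤ, F p = (∑' s : ℤ, g s) * ∑' v : ℤ, h v := by
    rw [tsum_congr hFe, e.tsum_eq G, Summable.tsum_mul_tsum hsumg hsumh hsumG]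
  rw [htF]
  have h1 : 0 ≤ ∑' v : ℤ, h v := tsum_nonneg hh_nonneg
  have h2 : 0 ≤ Real.exp (-δ * T) / (1 - Real.exp (-δ)) := by
    apply div_nonneg (Real.exp_nonneg _); linarith
  exact mul_le_mul htsumg htsumh h1 h2
end

section
/- Let X ≥ 2 be a real number, let q be a squarefree positive integer all of whose prime factors are at most X, and let γ be a real-valued function on the positive integers with finite support. Let W be the set of positive integers w all of whose prime factors are at most X and such that w * q is a perfect square. Then ∑_{w₁ ∈ W} ∑_{w₂ ∈ W} γ(w₁) * γ(w₂) / Real.sqrt (w₁ * w₂) * ∏_{p prime, p ∣ w₁ * w₂} (1 − 1/p) ≥ 0, where the sums range over the (finitely many) elements of W in the support of γ. -/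
open Finset in
open Classical in
theorem diagonal_twisted_form_nonneg (X : ℝ) (hX : 2 ≤ X) (q : ℕ) (hq0 : 0 < q)
    (hsf : Squarefree q) (hqX : ∀ p : ℕ, p.Prime → p ∣ q → (p : ℝ) ≤ X)
    (γ : ℕ →₀ ℝ) :
    0 ≤ ∑ w₁ ∈ γ.support.filter
          (fun w => 0 < w ∧ (∀ p : ℕ, p.Prime → p ∣ w → (p : ℝ) ≤ X) ∧ IsSquare (w * q)),
        ∑ w₂ ∈ γ.support.filter
          (fun w => 0 < w ∧ (∀ p : ℕ, p.Prime → p ∣ w → (p : ℝ) ≤ X) ∧ IsSquare (w * q)),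
          γ w₁ * γ w₂ / Real.sqrt ((w₁ : ℝ) * (w₂ : ℝ)) *
            ∏ p ∈ (w₁ * w₂).primeFactors, (1 - 1 / (p : ℝ)) := by
  set S := γ.support.filter
      (fun w => 0 < w ∧ (∀ p : ℕ, p.Prime → p ∣ w → (p : ℝ) ≤ X) ∧ IsSquare (w * q)) with hS
  have hSpos : ∀ w ∈ S, 0 < w := fun w hw => (Finset.mem_filter.mp hw).2.1
  set U : Finset ℕ := S.biUnion Nat.primeFactors with hU
  have hUprime : ∀ p ∈ U, p.Prime := by
    intro p hp
    rcases Finset.mem_biUnion.mp hp with ⟨w, _, hpw⟩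
    exact Nat.prime_of_mem_primeFactors hpw
  have hUsub : ∀ w ∈ S, w.primeFactors ⊆ U := fun w hw p hp =>
    Finset.mem_biUnion.mpr ⟨w, hw, hp⟩
  have hfac : ∀ p : ℕ, p.Prime → (0:ℝ) < 1 - 1 / p := by
    intro p hp
    have h2 : (2:ℝ) ≤ p := by exact_mod_cast hp.two_le
    have hp0 : (0:ℝ) < p := by linarith
    rw [sub_pos, div_lt_one hp0]; linarith
  set f : ℕ → ℝ := fun w => ∏ p ∈ w.primeFactors, (1 - 1 / (p:ℝ)) with hf
  set c : ℕ → ℝ := fun w => γ w * f w / Real.sqrt w with hc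
  set k : ℕ → ℝ := fun p => 1 / ((p:ℝ) - 1) with hk
  set g : ℕ → Finset ℕ → ℝ := fun w T => if T ⊆ w.primeFactors then c w else 0 with hg
  have key : ∀ w₁ ∈ S, ∀ w₂ ∈ S,
      γ w₁ * γ w₂ / Real.sqrt ((w₁:ℝ) * (w₂:ℝ)) *
        ∏ p ∈ (w₁ * w₂).primeFactors, (1 - 1 / (p:ℝ))
      = ∑ T ∈ U.powerset, (∏ p ∈ T, k p) * (g w₁ T * g w₂ T) := by
    intro w₁ hw₁ w₂ hw₂
    have h₁ : w₁ ≠ 0 := (hSpos w₁ hw₁).ne'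
    have h₂ : w₂ ≠ 0 := (hSpos w₂ hw₂).ne'
    set A := w₁.primeFactors
    set B := w₂.primeFactors
    have hprodAB_ne : ∀ (s : Finset ℕ), (∀ p ∈ s, p.Prime) →
        (0:ℝ) < ∏ p ∈ s, (1 - 1/(p:ℝ)) := by
      intro s hs
      exact Finset.prod_pos fun p hp => hfac p (hs p hp)
    have hAprime : ∀ p ∈ A, p.Prime := fun p hp => Nat.prime_of_mem_primeFactors hp
    have hBprime : ∀ p ∈ B, p.Prime := fun p hp => Nat.prime_of_mem_primeFactors hp
    have hIprime : ∀ p ∈ A ∩ B, p.Prime := fun p hp =>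
      hAprime p (Finset.mem_of_mem_inter_left hp)
    -- step A : LHS = c w₁ * c w₂ * ∏_{p ∈ A ∩ B} (1 - 1/p)⁻¹
    have hunion : (w₁ * w₂).primeFactors = A ∪ B := Nat.primeFactors_mul h₁ h₂
    have hprodunion : (∏ p ∈ A ∪ B, (1 - 1/(p:ℝ)))
        = (∏ p ∈ A, (1 - 1/(p:ℝ))) * (∏ p ∈ B, (1 - 1/(p:ℝ)))
          * (∏ p ∈ A ∩ B, (1 - 1/(p:ℝ)))⁻¹ := by
      have := Finset.prod_union_inter (s₁ := A) (s₂ := B) (f := fun p => (1 - 1/(p:ℝ)))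
      have hI := (hprodAB_ne _ hIprime).ne'
      field_simp
      linarith [this]
    have hsqrt : Real.sqrt ((w₁:ℝ) * (w₂:ℝ)) = Real.sqrt w₁ * Real.sqrt w₂ :=
      Real.sqrt_mul (by positivity) _
    have hs₁ : Real.sqrt w₁ ≠ 0 := by
      have : (0:ℝ) < w₁ := by exact_mod_cast hSpos w₁ hw₁
      positivity
    have hs₂ : Real.sqrt w₂ ≠ 0 := by
      have : (0:ℝ) < w₂ := by exact_mod_cast hSpos w₂ hw₂
      positivity
    have stepA : γ w₁ * γ w₂ / Real.sqrt ((w₁:ℝ) * (w₂:ℝ)) *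
        ∏ p ∈ (w₁ * w₂).primeFactors, (1 - 1 / (p:ℝ))
        = c w₁ * c w₂ * ∏ p ∈ A ∩ B, (1 - 1/(p:ℝ))⁻¹ := by
      rw [hunion, hprodunion, hsqrt, hc, hf]
      rw [← Finset.prod_inv_distrib]
      field_simp
      ring
    -- step B : ∏_{p ∈ A∩B} (1-1/p)⁻¹ = ∑_{T ⊆ A∩B} ∏_{p∈T} k p
    have hkp : ∀ p : ℕ, p.Prime → (1 - 1/(p:ℝ))⁻¹ = k p + 1 := by
      intro p hp
      have h2 : (2:ℝ) ≤ p := by exact_mod_cast hp.two_le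
      have hne : (p:ℝ) - 1 ≠ 0 := by linarith
      have hne' : (p:ℝ) ≠ 0 := by linarith
      rw [hk]
      field_simp
      ring
    have stepB : (∏ p ∈ A ∩ B, (1 - 1/(p:ℝ))⁻¹)
        = ∑ T ∈ (A ∩ B).powerset, ∏ p ∈ T, k p := by
      rw [Finset.prod_congr rfl (fun p hp => hkp p (hIprime p hp))]
      rw [Finset.prod_add]
      refine Finset.sum_congr rfl fun T hT => ?_
      simp
    -- step C : extend to U.powerset
    have hIU : A ∩ B ⊆ U := fun p hp =>
      hUsub w₁ hw₁ (Finset.mem_of_mem_inter_left hp)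
    have stepC : (∑ T ∈ (A ∩ B).powerset, ∏ p ∈ T, k p)
        = ∑ T ∈ U.powerset, (if T ⊆ A ∩ B then ∏ p ∈ T, k p else 0) := by
      rw [← Finset.sum_filter]
      refine Finset.sum_congr ?_ fun _ _ => rfl
      ext T
      simp only [Finset.mem_powerset, Finset.mem_filter]
      exact ⟨fun h => ⟨h.trans hIU, h⟩, fun h => h.2⟩
    rw [stepA, stepB, stepC, Finset.mul_sum]
    refine Finset.sum_congr rfl fun T hT => ?_
    rw [hg]
    simp only [Finset.subset_inter_iff]
    by_cases h1 : T ⊆ A <;> by_cases h2 : T ⊆ B <;> simp [h1, h2, show (T ⊆ w₁.primeFactors) = (T ⊆ A) from rfl, show (T ⊆ w₂.primeFactors) = (T ⊆ B) from rfl] <;> ring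
  calc (0:ℝ) ≤ ∑ T ∈ U.powerset, (∏ p ∈ T, k p) * (∑ w ∈ S, g w T)^2 := by
        refine Finset.sum_nonneg fun T hT => ?_
        refine mul_nonneg (Finset.prod_nonneg fun p hp => ?_) (sq_nonneg _)
        have hp' : p.Prime := hUprime p ((Finset.mem_powerset.mp hT) hp)
        have h2 : (2:ℝ) ≤ p := by exact_mod_cast hp'.two_le
        have h1 : (1:ℝ) ≤ (p:ℝ) - 1 := by linarith
        rw [hk]
        positivity
    _ = ∑ w₁ ∈ S, ∑ w₂ ∈ S,
          γ w₁ * γ w₂ / Real.sqrt ((w₁:ℝ) * (w₂:ℝ)) *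
            ∏ p ∈ (w₁ * w₂).primeFactors, (1 - 1 / (p:ℝ)) := by
        rw [show (∑ T ∈ U.powerset, (∏ p ∈ T, k p) * (∑ w ∈ S, g w T)^2)
            = ∑ T ∈ U.powerset, ∑ w₁ ∈ S, ∑ w₂ ∈ S,
                (∏ p ∈ T, k p) * (g w₁ T * g w₂ T) from
          Finset.sum_congr rfl fun T _ => by
            rw [sq, Finset.sum_mul_sum, Finset.mul_sum]
            exact Finset.sum_congr rfl fun w₁ _ => by rw [Finset.mul_sum]]
        rw [Finset.sum_comm]
        refine Finset.sum_congr rfl fun w₁ h₁ => ?_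
        rw [Finset.sum_comm]
        exact Finset.sum_congr rfl fun w₂ h₂ => (key w₁ h₁ w₂ h₂).symm
end
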